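/- Let A be a Noetherian ring and R a domain essentially of finite type over A. Suppose R is a simple D_A(R)-module (i.e., for every nonzero c ∈ R there exists ∂ ∈ D_A(R) with ∂(c) = 1). Then for every ideal I ⊆ R, the differential closure of I equals its radical: I^diff_A = √I. Conversely, if 0 ≠ I ⊆ R is a nonzero D_A(R)-submodule of R, then I^diff_A = R; hence √J = J^diff_A for all ideals J if and only if R is a simple D_A(R)-module. -/
import Mathlib


/-- `IsDiffOp A n φ` says that the `A`-linear endomorphism `φ` of `R` is an
`A`-linear differential operator of order at most `n`. -/
def IsDiffOp (A : Type*) {R : Type*} [CommRing A] [CommRing R] [Algebra A R] :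
    ℕ → (R →ₗ[A] R) → Prop
  | 0 => fun φ => ∃ r : R, φ = LinearMap.mulLeft A r
  | n + 1 => fun φ => ∀ a : R,
      IsDiffOp A n (φ ∘ₗ LinearMap.mulLeft A a - LinearMap.mulLeft A a ∘ₗ φ)

theorem isDiffOp_comp_mulLeft (A : Type*) {R : Type*} [CommRing A] [CommRing R]
    [Algebra A R] (x : R) (n : ℕ) :
    ∀ φ : R →ₗ[A] R, IsDiffOp A n φ → IsDiffOp A n (φ ∘ₗ LinearMap.mulLeft A x) := by
  induction n with
  | zero =>
    rintro φ ⟨r, rfl⟩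
    exact ⟨r * x, by ext y; simp [mul_assoc]⟩
  | succ n ih =>
    intro φ h a
    have h2 := ih _ (h a)
    have key : (φ ∘ₗ LinearMap.mulLeft A x) ∘ₗ LinearMap.mulLeft A a -
        LinearMap.mulLeft A a ∘ₗ (φ ∘ₗ LinearMap.mulLeft A x) =
        (φ ∘ₗ LinearMap.mulLeft A a - LinearMap.mulLeft A a ∘ₗ φ) ∘ₗ LinearMap.mulLeft A x := by
      ext y
      simp [mul_left_comm]
    rw [key]
    exact h2

/-- The `n`-th differential power of an ideal `I` of the `A`-algebra `R`:
the set of `r ∈ R` such that `∂ r ∈ I` for every `A`-linear differential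
operator `∂` of order at most `n - 1`. -/
def diffPow (A : Type*) {R : Type*} [CommRing A] [CommRing R] [Algebra A R]
    (n : ℕ) (I : Ideal R) : Ideal R where
  carrier := {r | ∀ φ : R →ₗ[A] R, IsDiffOp A (n - 1) φ → φ r ∈ I}
  add_mem' := fun hx hy φ hφ => by simp [map_add]; exact I.add_mem (hx φ hφ) (hy φ hφ)
  zero_mem' := fun φ _ => by simpa using I.zero_mem
  smul_mem' := fun c x hx => by
    intro φ hφ
    have := hx (φ ∘ₗ LinearMap.mulLeft A c) (isDiffOp_comp_mulLeft A c _ φ hφ)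
    simpa [smul_eq_mul] using this

/-- The differential closure of an ideal `I` with respect to `A`: elements `r`
such that `c * r ^ n ∈ I^⟨n⟩_A` for some fixed nonzero `c` and all `n ≫ 0`. -/
def diffClosure (A : Type*) {R : Type*} [CommRing A] [CommRing R] [Algebra A R]
    (I : Ideal R) : Set R :=
  {r | ∃ c : R, c ≠ 0 ∧ ∃ N : ℕ, ∀ n : ℕ, N ≤ n → c * r ^ n ∈ diffPow A n I}

section AuxLemmas

variable (A : Type*) {R : Type*} [CommRing A] [CommRing R] [Algebra A R]

lemma mem_diffPow {n : ℕ} {I : Ideal R} {x : R} :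
    x ∈ diffPow A n I ↔ ∀ φ : R →ₗ[A] R, IsDiffOp A (n - 1) φ → φ x ∈ I := Iff.rfl

lemma isDiffOp_succ : ∀ (n : ℕ) (φ : R →ₗ[A] R), IsDiffOp A n φ → IsDiffOp A (n + 1) φ := by
  intro n
  induction n with
  | zero =>
    rintro φ ⟨r, rfl⟩ a
    exact ⟨0, by ext y; simp [mul_left_comm]⟩
  | succ n ih => intro φ h a; exact ih _ (h a)

lemma isDiffOp_mono {m n : ℕ} (hmn : m ≤ n) (φ : R →ₗ[A] R) (h : IsDiffOp A m φ) :
    IsDiffOp A n φ := by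
  induction hmn with
  | refl => exact h
  | step _ ih => exact isDiffOp_succ A _ _ ih

lemma isDiffOp_add : ∀ (n : ℕ) (φ ψ : R →ₗ[A] R),
    IsDiffOp A n φ → IsDiffOp A n ψ → IsDiffOp A n (φ + ψ) := by
  intro n
  induction n with
  | zero => rintro φ ψ ⟨r, rfl⟩ ⟨s, rfl⟩; exact ⟨r + s, by ext y; simp [add_mul]⟩
  | succ n ih =>
    intro φ ψ hφ hψ a
    have key : (φ + ψ) ∘ₗ LinearMap.mulLeft A a - LinearMap.mulLeft A a ∘ₗ (φ + ψ)
        = (φ ∘ₗ LinearMap.mulLeft A a - LinearMap.mulLeft A a ∘ₗ φ)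
          + (ψ ∘ₗ LinearMap.mulLeft A a - LinearMap.mulLeft A a ∘ₗ ψ) := by
      ext y; simp; ring
    rw [key]
    exact ih _ _ (hφ a) (hψ a)

lemma isDiffOp_mulLeft_comp (r : R) : ∀ (n : ℕ) (ψ : R →ₗ[A] R),
    IsDiffOp A n ψ → IsDiffOp A n (LinearMap.mulLeft A r ∘ₗ ψ) := by
  intro n
  induction n with
  | zero => rintro ψ ⟨s, rfl⟩; exact ⟨r * s, by ext y; simp [mul_assoc]⟩
  | succ n ih =>
    intro ψ h a
    have key : (LinearMap.mulLeft A r ∘ₗ ψ) ∘ₗ LinearMap.mulLeft A a -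
        LinearMap.mulLeft A a ∘ₗ (LinearMap.mulLeft A r ∘ₗ ψ)
        = LinearMap.mulLeft A r ∘ₗ (ψ ∘ₗ LinearMap.mulLeft A a - LinearMap.mulLeft A a ∘ₗ ψ) := by
      ext y; simp [mul_left_comm, mul_sub]
    rw [key]
    exact ih _ (h a)

lemma isDiffOp_comp : ∀ (k i j : ℕ), i + j ≤ k → ∀ (φ ψ : R →ₗ[A] R),
    IsDiffOp A i φ → IsDiffOp A j ψ → IsDiffOp A (i + j) (φ ∘ₗ ψ) := by
  intro k
  induction k with
  | zero =>
    intro i j hij φ ψ hφ hψ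
    obtain ⟨rfl, rfl⟩ : i = 0 ∧ j = 0 := by omega
    obtain ⟨s, rfl⟩ := hψ
    exact isDiffOp_comp_mulLeft A s 0 φ hφ
  | succ k ih =>
    intro i j hij φ ψ hφ hψ
    rcases j with _ | j'
    · obtain ⟨s, rfl⟩ := hψ
      exact isDiffOp_comp_mulLeft A s i φ hφ
    · rcases i with _ | i'
      · obtain ⟨r, rfl⟩ := hφ
        exact isDiffOp_mono A (by omega) _ (isDiffOp_mulLeft_comp A r _ ψ hψ)
      · intro a
        have key : (φ ∘ₗ ψ) ∘ₗ LinearMap.mulLeft A a - LinearMap.mulLeft A a ∘ₗ (φ ∘ₗ ψ)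
            = φ ∘ₗ (ψ ∘ₗ LinearMap.mulLeft A a - LinearMap.mulLeft A a ∘ₗ ψ)
              + (φ ∘ₗ LinearMap.mulLeft A a - LinearMap.mulLeft A a ∘ₗ φ) ∘ₗ ψ := by
          ext y; simp [map_sub]
        rw [key]
        refine isDiffOp_add A _ _ _ ?_ ?_
        · exact ih (i' + 1) j' (by show i' + 1 + j' ≤ k; omega) _ _ hφ (hψ a)
        · exact isDiffOp_mono A (show i' + (j' + 1) ≤ i' + 1 + j' by omega) _ (ih i' (j' + 1) (by show i' + (j' + 1) ≤ k; omega) _ _ (hφ a) hψ)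

/-- A differential operator of order at most `a` maps `J ^ b` into `J ^ (b - a)`. -/
lemma isDiffOp_pow_mem (J : Ideal R) : ∀ (b a : ℕ) (φ : R →ₗ[A] R), IsDiffOp A a φ →
    ∀ x ∈ J ^ b, φ x ∈ J ^ (b - a) := by
  intro b
  induction b with
  | zero =>
    intro a φ hφ x hx
    rw [Nat.zero_sub, pow_zero, Ideal.one_eq_top]
    exact Submodule.mem_top
  | succ b ih =>
    intro a φ hφ x hx
    rcases a with _ | a'
    · obtain ⟨r, rfl⟩ := hφ
      simpa using Ideal.mul_mem_left _ r hx
    · rw [Nat.succ_sub_succ]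
      rw [pow_succ] at hx
      refine Submodule.mul_induction_on hx ?_ ?_
      · intro z hz y hy
        have hzy : φ (z * y) = y * φ z +
            (φ ∘ₗ LinearMap.mulLeft A y - LinearMap.mulLeft A y ∘ₗ φ) z := by
          simp only [LinearMap.sub_apply, LinearMap.coe_comp, Function.comp_apply,
            LinearMap.mulLeft_apply]
          rw [mul_comm z y]; ring
        rw [hzy]
        refine Ideal.add_mem _ ?_ ?_
        · have h1 := ih (a' + 1) φ hφ z hz
          have h2 : y * φ z ∈ J ^ (b - (a' + 1) + 1) := by
            rw [pow_succ, mul_comm y (φ z)]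
            exact Ideal.mul_mem_mul h1 hy
          exact Ideal.pow_le_pow_right (by omega) h2
        · exact ih a' _ (hφ y) z hz
      · intro u v hu hv
        rw [map_add]
        exact Ideal.add_mem _ hu hv

/-- Differential powers of a prime ideal are primary (auxiliary form). -/
lemma diffOp_primary (p : Ideal R) (hp : p.IsPrime) :
    ∀ (d : ℕ) (x y : R), y ∉ p → (∀ φ : R →ₗ[A] R, IsDiffOp A d φ → φ (x * y) ∈ p) →
      ∀ φ : R →ₗ[A] R, IsDiffOp A d φ → φ x ∈ p := by
  intro d
  induction d with
  | zero =>
    rintro x y hy h φ ⟨r, rfl⟩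
    have h1 := h (LinearMap.mulLeft A r) ⟨r, rfl⟩
    simp only [LinearMap.mulLeft_apply] at h1 ⊢
    rw [← mul_assoc] at h1
    exact (hp.mem_or_mem h1).resolve_right hy
  | succ d ih =>
    intro x y hy h φ hφ
    have hcomm : y * φ x = φ (x * y) -
        (φ ∘ₗ LinearMap.mulLeft A y - LinearMap.mulLeft A y ∘ₗ φ) x := by
      simp only [LinearMap.sub_apply, LinearMap.coe_comp, Function.comp_apply,
        LinearMap.mulLeft_apply]
      rw [mul_comm x y]; ring
    have h1 : φ (x * y) ∈ p := h φ hφ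
    have h2 := ih x y hy (fun ψ hψ => h ψ (isDiffOp_succ A d ψ hψ)) _ (hφ y)
    have h3 : y * φ x ∈ p := by rw [hcomm]; exact Ideal.sub_mem _ h1 h2
    exact (hp.mem_or_mem h3).resolve_left hy

end AuxLemmas
section MainLemmas

variable {A R : Type*} [CommRing A] [CommRing R] [Algebra A R]

lemma diffClosure_subset_radical [IsDomain R]
    (hs : ∀ c : R, c ≠ 0 → ∃ (i : ℕ) (φ : R →ₗ[A] R), IsDiffOp A i φ ∧ φ c = 1)
    (I : Ideal R) : diffClosure A I ⊆ (I.radical : Set R) := by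
  intro r hr
  rw [SetLike.mem_coe]
  by_contra hrad
  have hex : ∃ p : Ideal R, I ≤ p ∧ p.IsPrime ∧ r ∉ p := by
    by_contra h'
    push_neg at h'
    refine hrad ?_
    rw [Ideal.radical_eq_sInf]
    exact Ideal.mem_sInf.mpr fun {J} hJ => h' J hJ.1 hJ.2
  obtain ⟨p, hIp, hp, hrp⟩ := hex
  obtain ⟨c, hc0, N, hN⟩ := hr
  obtain ⟨i, φ, hφ, hφc⟩ := hs c hc0
  set n := N + i + 1 with hn
  have h1 : ∀ ψ : R →ₗ[A] R, IsDiffOp A (n - 1) ψ → ψ (c * r ^ n) ∈ p :=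
    fun ψ hψ => hIp ((mem_diffPow A).mp (hN n (by omega)) ψ hψ)
  have hrn : r ^ n ∉ p := fun h => hrp (hp.mem_of_pow_mem _ h)
  have h2 : φ c ∈ p :=
    diffOp_primary A p hp (n - 1) c (r ^ n) hrn h1 φ (isDiffOp_mono A (by omega) φ hφ)
  rw [hφc] at h2
  exact hp.ne_top ((Ideal.eq_top_iff_one p).mpr h2)

lemma radical_subset_diffClosure [IsDomain R] (I : Ideal R) (hFG : I.radical.FG) :
    (I.radical : Set R) ⊆ diffClosure A I := by
  intro r hr
  rw [SetLike.mem_coe] at hr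
  by_cases hr0 : r = 0
  · subst hr0
    refine ⟨1, one_ne_zero, 1, fun n hn => ?_⟩
    rw [zero_pow (by omega), mul_zero]
    exact (diffPow A n I).zero_mem
  · obtain ⟨m, hm⟩ := Ideal.exists_radical_pow_le_of_fg I hFG
    refine ⟨r ^ m, pow_ne_zero m hr0, 1, fun n hn => (mem_diffPow A).mpr fun φ hφ => ?_⟩
    have hx : r ^ m * r ^ n ∈ I.radical ^ (m + n) := by
      rw [← pow_add]; exact Ideal.pow_mem_pow hr (m + n)
    have h1 := isDiffOp_pow_mem A I.radical (m + n) (n - 1) φ hφ _ hx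
    exact hm (Ideal.pow_le_pow_right (show m ≤ m + n - (n - 1) by omega) h1)

lemma diffClosure_of_stable [IsDomain R] (I : Ideal R) (hI : I ≠ ⊥)
    (hst : ∀ (i : ℕ) (φ : R →ₗ[A] R), IsDiffOp A i φ → ∀ x ∈ I, φ x ∈ I) :
    diffClosure A I = Set.univ := by
  obtain ⟨c, hcI, hc0⟩ := Submodule.exists_mem_ne_zero_of_ne_bot hI
  refine Set.eq_univ_of_forall fun r =>
    ⟨c, hc0, 0, fun n _ => (mem_diffPow A).mpr fun φ hφ =>
      hst (n - 1) φ hφ _ (I.mul_mem_right _ hcI)⟩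

lemma simple_of_diffClosure_eq_radical [IsDomain R]
    (h : ∀ J : Ideal R, diffClosure A J = (J.radical : Set R)) :
    ∀ c : R, c ≠ 0 → ∃ (i : ℕ) (φ : R →ₗ[A] R), IsDiffOp A i φ ∧ φ c = 1 := by
  intro c hc
  set I : Ideal R :=
    { carrier := {x | ∃ (i : ℕ) (φ : R →ₗ[A] R), IsDiffOp A i φ ∧ φ c = x}
      add_mem' := by
        rintro x y ⟨i, φ, hφ, rfl⟩ ⟨j, ψ, hψ, rfl⟩
        exact ⟨max i j, φ + ψ,
          isDiffOp_add A _ _ _ (isDiffOp_mono A (le_max_left i j) φ hφ)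
            (isDiffOp_mono A (le_max_right i j) ψ hψ), by simp⟩
      zero_mem' := ⟨0, 0, ⟨0, by ext y; simp⟩, by simp⟩
      smul_mem' := by
        rintro r x ⟨i, φ, hφ, rfl⟩
        exact ⟨i, LinearMap.mulLeft A r ∘ₗ φ, isDiffOp_mulLeft_comp A r i φ hφ,
          by simp [smul_eq_mul]⟩ } with hIdef
  have hcI : c ∈ I := ⟨0, LinearMap.mulLeft A 1, ⟨1, rfl⟩, by simp⟩
  have hIbot : I ≠ ⊥ := fun hbot => hc (by simpa [hbot] using hcI)
  have hst : ∀ (i : ℕ) (φ : R →ₗ[A] R), IsDiffOp A i φ → ∀ x ∈ I, φ x ∈ I := by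
    rintro i φ hφ x ⟨j, ψ, hψ, rfl⟩
    exact ⟨i + j, φ ∘ₗ ψ, isDiffOp_comp A (i + j) i j le_rfl φ ψ hφ hψ, rfl⟩
  have huniv := diffClosure_of_stable I hIbot hst
  rw [h I] at huniv
  have h1 : (1 : R) ∈ I.radical := by
    rw [← SetLike.mem_coe, huniv]; trivial
  obtain ⟨k, hk⟩ := Ideal.mem_radical_iff.mp h1
  rw [one_pow] at hk
  exact hk

end MainLemmas

/-- For `R` a domain essentially of finite type over a Noetherian ring `A`:
if `R` is a simple `D_A(R)`-module then differential closure equals radical;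
any nonzero `D_A(R)`-submodule ideal has differential closure `R`; and
differential closure equals radical for all ideals iff `R` is `D`-simple. -/
theorem diffClosure_eq_radical_iff_simple {A R : Type*} [CommRing A]
    [IsNoetherianRing A] [CommRing R] [IsDomain R] [Algebra A R]
    [Algebra.EssFiniteType A R] :
    ((∀ c : R, c ≠ 0 → ∃ (i : ℕ) (φ : R →ₗ[A] R), IsDiffOp A i φ ∧ φ c = 1) →
        ∀ I : Ideal R, diffClosure A I = (I.radical : Set R)) ∧
      (∀ I : Ideal R, I ≠ ⊥ →
        (∀ (i : ℕ) (φ : R →ₗ[A] R), IsDiffOp A i φ → ∀ x ∈ I, φ x ∈ I) →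
        diffClosure A I = Set.univ) ∧
      ((∀ J : Ideal R, diffClosure A J = (J.radical : Set R)) ↔
        ∀ c : R, c ≠ 0 → ∃ (i : ℕ) (φ : R →ₗ[A] R), IsDiffOp A i φ ∧ φ c = 1) := by
  have hNoethSub : IsNoetherianRing (Algebra.EssFiniteType.subalgebra A R) :=
    isNoetherianRing_of_fg ⟨Algebra.EssFiniteType.finset A R, rfl⟩
  have hNoeth : IsNoetherianRing R :=
    IsLocalization.isNoetherianRing (Algebra.EssFiniteType.submonoid A R) R hNoethSub
  have part1 : (∀ c : R, c ≠ 0 → ∃ (i : ℕ) (φ : R →ₗ[A] R), IsDiffOp A i φ ∧ φ c = 1) →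
      ∀ I : Ideal R, diffClosure A I = (I.radical : Set R) := fun hs I =>
    Set.Subset.antisymm (diffClosure_subset_radical hs I)
      (radical_subset_diffClosure I (IsNoetherian.noetherian _))
  exact ⟨part1, fun I hI hst => diffClosure_of_stable I hI hst,
    ⟨simple_of_diffClosure_eq_radical, part1⟩⟩
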